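/- Let G be a group with a p-valuation ω and let ‖·‖_{1/p} be the multiplicative norm on the completed group ring ℤ_p[[G]] with ‖g−1‖_{1/p} ≤ p^{−ω(g)}. For structure coefficients c_{βγ,α} ∈ ℤ_p defined by b^β b^γ = Σ_α c_{βγ,α} b^α (where b_i = h_i − 1 for an ordered basis (h_1,…,h_d) and τα = Σ_i α_i ω(h_i)), one has v_p(c_{βγ,α}) ≥ max(0, τβ + τγ − τα), and consequently |c_{βγ,α}| r^{τα} ≤ r^{τβ+τγ} for every r with 1/p ≤ r ≤ 1. -/
import Mathlib


/-!
STATEMENT 13: Let `G` be a group with a (rational-valued) `p`-valuation `ω` and ordered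
basis `(h 1, …, h d)`, and let `‖·‖_{1/p}` be the multiplicative norm on the completed
group ring `ℤ_p[[G]]` (modelled here by a complete normed `ℤ_p`-algebra `R` in which every
element has a convergent expansion `Σ_α d_α 𝐛^α`, `𝐛^α = (h 1 - 1)^{α 1} ⋯ (h d - 1)^{α d}`,
with `‖Σ_α d_α 𝐛^α‖ = sup_α ‖d_α‖ p^{-τα}`).  For the structure coefficients
`c_{βγ,α} ∈ ℤ_p` defined by `𝐛^β 𝐛^γ = Σ_α c_{βγ,α} 𝐛^α` one has
`v_p(c_{βγ,α}) ≥ max (0, τβ + τγ - τα)` — expressed below in terms of the norm — and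
consequently `‖c_{βγ,α}‖ r^{τα} ≤ r^{τβ+τγ}` for every `1/p ≤ r ≤ 1`.
-/

lemma st13_norm_one_le {R : Type} [NormedRing R]
    (hmul : ∀ x y : R, ‖x * y‖ = ‖x‖ * ‖y‖) : ‖(1 : R)‖ ≤ 1 := by
  have h1 := hmul 1 1
  rw [mul_one] at h1
  nlinarith [sq_nonneg (‖(1 : R)‖ - 1)]

lemma st13_norm_listProd_le {R : Type} [NormedRing R]
    (hmul : ∀ x y : R, ‖x * y‖ = ‖x‖ * ‖y‖) :
    ∀ l : List R, ‖l.prod‖ ≤ (l.map (‖·‖)).prod := by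
  intro l
  induction l with
  | nil => simpa using st13_norm_one_le hmul
  | cons a l ih =>
      simp only [List.prod_cons, List.map_cons, hmul]
      exact mul_le_mul_of_nonneg_left ih (norm_nonneg a)

lemma st13_norm_pow_le {R : Type} [NormedRing R]
    (hmul : ∀ x y : R, ‖x * y‖ = ‖x‖ * ‖y‖) (x : R) :
    ∀ n : ℕ, ‖x ^ n‖ ≤ ‖x‖ ^ n := by
  intro n
  induction n with
  | zero => simpa using st13_norm_one_le hmul
  | succ n ih =>
      rw [pow_succ, pow_succ, hmul]
      exact mul_le_mul_of_nonneg_right ih (norm_nonneg x)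

theorem statement13
    (p : ℕ) [Fact p.Prime] (G : Type) [Group G]
    -- a `p`-valuation on `G` (with the convention `ω 1 = ∞`, all axioms are stated for
    -- nonidentity elements), rational-valued
    (ω : G → ℝ)
    (hωrange : ∀ g : G, g ≠ 1 → 1 / ((p : ℝ) - 1) < ω g)
    (hωrat : ∀ g : G, g ≠ 1 → ∃ q : ℚ, ω g = (q : ℝ))
    (hωmin : ∀ g h : G, g ≠ 1 → h ≠ 1 → g * h⁻¹ ≠ 1 → min (ω g) (ω h) ≤ ω (g * h⁻¹))
    (hωcomm : ∀ g h : G, g ≠ 1 → h ≠ 1 → g⁻¹ * h⁻¹ * g * h ≠ 1 →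
      ω g + ω h ≤ ω (g⁻¹ * h⁻¹ * g * h))
    (hωpow : ∀ g : G, g ≠ 1 → ω (g ^ p) = ω g + 1)
    -- the ordered basis
    (d : ℕ) (h : Fin d → G) (hne : ∀ i, h i ≠ 1)
    -- the completed group ring `R = ℤ_p[[G]]`
    (R : Type) [NormedRing R] [Algebra ℤ_[p] R] [CompleteSpace R]
    (ι : G →* R)
    (hg : ∀ g : G, g ≠ 1 → ‖ι g - 1‖ ≤ (p : ℝ) ^ (-ω g))
    (hmulnorm : ∀ x y : R, ‖x * y‖ = ‖x‖ * ‖y‖)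
    -- the norm of `Σ_α d_α 𝐛^α` is `sup_α ‖d_α‖ p^{-τα}`
    (hnorm : ∀ (dc : (Fin d → ℕ) → ℤ_[p]) (x : R),
      HasSum (fun α => dc α • (List.ofFn fun i => (ι (h i) - 1) ^ α i).prod) x →
      ‖x‖ = ⨆ α : Fin d → ℕ, ‖dc α‖ * (p : ℝ) ^ (-(∑ i, (α i : ℝ) * ω (h i))))
    -- the structure constants `c_{βγ,α}`
    (c : (Fin d → ℕ) → (Fin d → ℕ) → (Fin d → ℕ) → ℤ_[p])
    (hc : ∀ β γ,
      HasSum (fun α => c β γ α • (List.ofFn fun i => (ι (h i) - 1) ^ α i).prod)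
        ((List.ofFn fun i => (ι (h i) - 1) ^ β i).prod *
          (List.ofFn fun i => (ι (h i) - 1) ^ γ i).prod))
    (β γ α : Fin d → ℕ) :
    ‖c β γ α‖ ≤ (p : ℝ) ^
        (-(max 0 ((∑ i, (β i : ℝ) * ω (h i)) + (∑ i, (γ i : ℝ) * ω (h i)) -
          ∑ i, (α i : ℝ) * ω (h i)))) ∧
      ∀ r : ℝ, 1 / (p : ℝ) ≤ r → r ≤ 1 →
        ‖c β γ α‖ * r ^ (∑ i, (α i : ℝ) * ω (h i)) ≤
          r ^ ((∑ i, (β i : ℝ) * ω (h i)) + ∑ i, (γ i : ℝ) * ω (h i)) := by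
  have hp1 : (1:ℝ) < p := by exact_mod_cast (Fact.out : p.Prime).one_lt
  have hp0 : (0:ℝ) < p := lt_trans one_pos hp1
  have hω : ∀ i, 0 ≤ ω (h i) := by
    intro i
    refine le_of_lt (lt_of_le_of_lt ?_ (hωrange _ (hne i)))
    apply div_nonneg one_pos.le
    linarith
  have hT0 : ∀ δ : Fin d → ℕ, 0 ≤ ∑ i, (δ i : ℝ) * ω (h i) := fun δ =>
    Finset.sum_nonneg fun i _ => mul_nonneg (Nat.cast_nonneg _) (hω i)
  have hbound : ∀ δ : Fin d → ℕ,
      ‖(List.ofFn fun i => (ι (h i) - 1) ^ δ i).prod‖ ≤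
        (p : ℝ) ^ (-(∑ i, (δ i : ℝ) * ω (h i))) := by
    intro δ
    calc ‖(List.ofFn fun i => (ι (h i) - 1) ^ δ i).prod‖
        ≤ ((List.ofFn fun i => (ι (h i) - 1) ^ δ i).map (‖·‖)).prod :=
          st13_norm_listProd_le hmulnorm _
      _ = ∏ i, ‖(ι (h i) - 1) ^ δ i‖ := by
          rw [List.map_ofFn, List.prod_ofFn]; rfl
      _ ≤ ∏ i, (p : ℝ) ^ (-((δ i : ℝ) * ω (h i))) := by
          refine Finset.prod_le_prod (fun i _ => norm_nonneg _) (fun i _ => ?_)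
          calc ‖(ι (h i) - 1) ^ δ i‖ ≤ ‖ι (h i) - 1‖ ^ δ i :=
                st13_norm_pow_le hmulnorm _ _
            _ ≤ ((p : ℝ) ^ (-ω (h i))) ^ δ i := by
                exact pow_le_pow_left₀ (norm_nonneg _) (hg _ (hne i)) _
            _ = (p : ℝ) ^ (-((δ i : ℝ) * ω (h i))) := by
                rw [← Real.rpow_natCast ((p:ℝ) ^ (-ω (h i))) (δ i),
                  ← Real.rpow_mul hp0.le]
                ring_nf
      _ = (p : ℝ) ^ (-(∑ i, (δ i : ℝ) * ω (h i))) := by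
          rw [← Finset.sum_neg_distrib, Real.rpow_sum_of_pos hp0]
  set A := ∑ i, (α i : ℝ) * ω (h i) with hAdef
  set B1 := ∑ i, (β i : ℝ) * ω (h i) with hB1def
  set B2 := ∑ i, (γ i : ℝ) * ω (h i) with hB2def
  have hbdd : BddAbove (Set.range fun δ : Fin d → ℕ =>
      ‖c β γ δ‖ * (p : ℝ) ^ (-(∑ i, (δ i : ℝ) * ω (h i)))) := by
    refine ⟨1, ?_⟩
    rintro x ⟨a, rfl⟩
    exact mul_le_one₀ (PadicInt.norm_le_one _)
      (Real.rpow_nonneg hp0.le _)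
      (Real.rpow_le_one_of_one_le_of_nonpos hp1.le (neg_nonpos.mpr (hT0 a)))
  have key : ‖c β γ α‖ * (p : ℝ) ^ (-A) ≤ (p : ℝ) ^ (-(B1 + B2)) := by
    calc ‖c β γ α‖ * (p : ℝ) ^ (-A)
        ≤ ⨆ δ : Fin d → ℕ, ‖c β γ δ‖ * (p : ℝ) ^ (-(∑ i, (δ i : ℝ) * ω (h i))) :=
          le_ciSup hbdd α
      _ = ‖(List.ofFn fun i => (ι (h i) - 1) ^ β i).prod *
            (List.ofFn fun i => (ι (h i) - 1) ^ γ i).prod‖ :=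
          (hnorm (c β γ) _ (hc β γ)).symm
      _ = ‖(List.ofFn fun i => (ι (h i) - 1) ^ β i).prod‖ *
            ‖(List.ofFn fun i => (ι (h i) - 1) ^ γ i).prod‖ := hmulnorm _ _
      _ ≤ (p : ℝ) ^ (-B1) * (p : ℝ) ^ (-B2) :=
          mul_le_mul (hbound β) (hbound γ) (norm_nonneg _) (Real.rpow_nonneg hp0.le _)
      _ = (p : ℝ) ^ (-(B1 + B2)) := by rw [neg_add, Real.rpow_add hp0]
  have hc1 : ‖c β γ α‖ ≤ (p : ℝ) ^ (A - (B1 + B2)) := by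
    rw [show A - (B1 + B2) = -(B1 + B2) - (-A) by ring, Real.rpow_sub hp0,
      le_div_iff₀ (Real.rpow_pos_of_pos hp0 _)]
    exact key
  constructor
  · rcases le_total (B1 + B2 - A) 0 with h0 | h0
    · rw [max_eq_left h0, neg_zero, Real.rpow_zero]
      exact PadicInt.norm_le_one _
    · rw [max_eq_right h0, show -(B1 + B2 - A) = A - (B1 + B2) by ring]
      exact hc1
  · intro r hr1 hr2
    have hr0 : 0 < r := lt_of_lt_of_le (by positivity) hr1
    rcases le_total A (B1 + B2) with hAB | hAB
    · have h1 : ‖c β γ α‖ ≤ r ^ ((B1 + B2) - A) := by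
        refine hc1.trans ?_
        have heq : (p : ℝ) ^ (A - (B1 + B2)) = (1 / (p : ℝ)) ^ ((B1 + B2) - A) := by
          rw [show A - (B1 + B2) = -((B1 + B2) - A) by ring, Real.rpow_neg hp0.le,
            one_div, Real.inv_rpow hp0.le]
        rw [heq]
        exact Real.rpow_le_rpow (by positivity) hr1 (by linarith)
      calc ‖c β γ α‖ * r ^ A ≤ r ^ ((B1 + B2) - A) * r ^ A :=
            mul_le_mul_of_nonneg_right h1 (Real.rpow_nonneg hr0.le _)
        _ = r ^ (B1 + B2) := by rw [← Real.rpow_add hr0]; ring_nf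
    · have h2 : r ^ A ≤ r ^ (B1 + B2) :=
        Real.rpow_le_rpow_of_exponent_ge hr0 hr2 hAB
      calc ‖c β γ α‖ * r ^ A ≤ 1 * r ^ (B1 + B2) :=
            mul_le_mul (PadicInt.norm_le_one _) h2 (Real.rpow_nonneg hr0.le _) one_pos.le
        _ = r ^ (B1 + B2) := one_mul _
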